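/- Let η_α be the envelope of α: η_α(x) = 0 for x ≤ α, and η_α(x) = m_j x - n_j for x ∈ [a_j, a_{j-1}] (with a_{-1} = ∞, η_α(x) = 1 for x ≥ a_0 = 1). Then there is a constant Ω > 0 such that η_α(x) ≤ Ω·√(x - α) for all x ≥ α. -/

import Mathlib

open Filter Topology

-- growth facts
lemma aux_grow (e m : ℕ → ℤ)
    (he : ∀ j, 1 ≤ j → 3 ≤ e j)
    (hm0 : m 0 = 0) (hm1 : m 1 = 1)
    (hm : ∀ j, 1 ≤ j → m (j + 1) = e j * m j - m (j - 1)) :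
    ∀ j, 1 ≤ j → 1 ≤ m j ∧ m j ≤ m (j + 1) - m j := by
  intro j hj
  induction j, hj using Nat.le_induction with
  | base =>
    have h2 := hm 1 le_rfl
    simp only [Nat.sub_self] at h2
    have he1 := he 1 le_rfl
    constructor
    · omega
    · rw [h2, hm0, hm1]; nlinarith
  | succ j hj ih =>
    obtain ⟨h1, h2⟩ := ih
    have he' := he (j + 1) (by omega)
    have hr := hm (j + 1) (by omega)
    simp only [Nat.add_sub_cancel] at hr
    constructor
    · omega
    · rw [hr]
      nlinarith [mul_le_mul_of_nonneg_right (by linarith : (3:ℤ) ≤ e (j+1)) (by omega : (0:ℤ) ≤ m (j+1))]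

lemma aux_det (e m n : ℕ → ℤ)
    (hm0 : m 0 = 0) (hn0 : n 0 = -1) (hm1 : m 1 = 1) (hn1 : n 1 = 0)
    (hm : ∀ j, 1 ≤ j → m (j + 1) = e j * m j - m (j - 1))
    (hn : ∀ j, 1 ≤ j → n (j + 1) = e j * n j - n (j - 1)) :
    ∀ j, m j * n (j + 1) - m (j + 1) * n j = 1 := by
  intro j
  induction j with
  | zero => rw [hm0, hm1, hn0, hn1]; ring
  | succ j ih =>
    have h1 := hm (j + 1) (by omega)
    have h2 := hn (j + 1) (by omega)
    simp only [Nat.add_sub_cancel] at h1 h2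
    rw [h1, h2]
    linear_combination ih

-- D j k = m j * n k - n j * m k ; bounds for k ≥ j+1
lemma aux_D (m n : ℕ → ℤ)
    (hpos : ∀ j, 1 ≤ j → 1 ≤ m j)
    (hgrow : ∀ j, 1 ≤ j → 2 * m j ≤ m (j + 1))
    (hdet : ∀ j, m j * n (j + 1) - m (j + 1) * n j = 1) :
    ∀ j, 1 ≤ j → ∀ k, j + 1 ≤ k →
      (m k ≤ m (j + 1) * (m j * n k - n j * m k)) ∧
      (3 * (m (j + 1) * (m j * n k - n j * m k)) * m (k + 1) + 4 * (m j * m (j + 1))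
        ≤ 4 * (m k * m (k + 1))) := by
  intro j hj k hk
  -- basic positivities
  have hmj := hpos j hj
  have hmj1 := hpos (j + 1) (by omega)
  have hg4 : ∀ l, 1 ≤ l → 4 * m l ≤ m (l + 2) := by
    intro l hl
    have g1 := hgrow l hl
    have g2 : 2 * m (l + 1) ≤ m (l + 2) := hgrow (l + 1) (by omega)
    omega
  induction k, hk using Nat.le_induction with
  | base =>
    have hd : m j * n (j + 1) - n j * m (j + 1) = 1 := by linear_combination hdet j
    rw [hd]
    have h4 := hg4 j hj
    have hmj2 := hpos (j + 2) (by omega)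
    constructor
    · linarith
    · nlinarith [hpos (j+1) (by omega : 1 ≤ j+1)]
  | succ k hk ih =>
    obtain ⟨ih1, ih2⟩ := ih
    have hmk := hpos k (by omega)
    have hmk1 := hpos (k + 1) (by omega)
    have hmk2 := hpos (k + 2) (by omega)
    have hW : m k * (m j * n (k + 1) - n j * m (k + 1))
        - m (k + 1) * (m j * n k - n j * m k) = m j := by
      linear_combination (m j) * hdet k
    set dk := m j * n k - n j * m k with hdk
    set dk1 := m j * n (k + 1) - n j * m (k + 1) with hdk1
    have h4k := hg4 k (by omega)
    constructor
    · -- m (k+1) ≤ m (j+1) * dk1 ; multiply by m k > 0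
      have key : m k * (m (k + 1)) ≤ m k * (m (j + 1) * dk1) := by
        have e1 : m k * (m (j + 1) * dk1) = m (j + 1) * m (k + 1) * dk + m (j + 1) * m j := by
          linear_combination (m (j + 1)) * hW
        nlinarith [mul_le_mul_of_nonneg_right ih1 (by linarith : (0:ℤ) ≤ m (k + 1))]
      exact le_of_mul_le_mul_left key (by linarith)
    · -- upper bound step
      have key : m k * (3 * (m (j + 1) * dk1) * m (k + 2) + 4 * (m j * m (j + 1)))
          ≤ m k * (4 * (m (k + 1) * m (k + 2))) := by
        have e1 : m k * (3 * (m (j + 1) * dk1) * m (k + 2))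
            = 3 * (m (j + 1) * dk) * m (k + 1) * m (k + 2) + 3 * m (j + 1) * m j * m (k + 2) := by
          linear_combination (3 * m (j + 1) * m (k + 2)) * hW
        nlinarith [mul_le_mul_of_nonneg_right ih2 (by linarith : (0:ℤ) ≤ m (k + 2)),
          mul_pos (mul_pos (by linarith : (0:ℤ) < m j) (by linarith : (0:ℤ) < m (j+1)))
            (by linarith : (0:ℤ) < m (k + 2) - 4 * m k + 4 * m k)]
      exact le_of_mul_le_mul_left key (by linarith)

lemma aux_delta (m n : ℕ → ℤ) (α : ℝ)
    (hα : Tendsto (fun k => (n k : ℝ) / (m k : ℝ)) atTop (nhds α))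
    (hpos : ∀ j, 1 ≤ j → 1 ≤ m j)
    (hlow : ∀ j, 1 ≤ j → ∀ k, j + 1 ≤ k → m k ≤ m (j + 1) * (m j * n k - n j * m k))
    (hup : ∀ j, 1 ≤ j → ∀ k, j + 1 ≤ k →
      3 * (m (j + 1) * (m j * n k - n j * m k)) * m (k + 1) + 4 * (m j * m (j + 1))
        ≤ 4 * (m k * m (k + 1))) :
    ∀ j, 1 ≤ j → 1 / (m (j + 1) : ℝ) ≤ (m j : ℝ) * α - (n j : ℝ) ∧
      (m j : ℝ) * α - (n j : ℝ) ≤ 4 / (3 * (m (j + 1) : ℝ)) := by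
  intro j hj
  have hmj1 : (1 : ℝ) ≤ (m (j + 1) : ℝ) := by exact_mod_cast hpos (j + 1) (by omega)
  have ht : Tendsto (fun k => (m j : ℝ) * ((n k : ℝ) / (m k : ℝ)) - (n j : ℝ)) atTop
      (nhds ((m j : ℝ) * α - (n j : ℝ))) := (hα.const_mul _).sub_const _
  have heq : ∀ k, j + 1 ≤ k →
      (m j : ℝ) * ((n k : ℝ) / (m k : ℝ)) - (n j : ℝ)
        = ((m j * n k - n j * m k : ℤ) : ℝ) / (m k : ℝ) := by
    intro k hk
    have hmk : (1 : ℝ) ≤ (m k : ℝ) := by exact_mod_cast hpos k (by omega)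
    have : (m k : ℝ) ≠ 0 := by linarith
    push_cast
    field_simp
  constructor
  · apply ge_of_tendsto ht
    filter_upwards [eventually_atTop.2 ⟨j + 1, fun k hk => hk⟩] with k hk
    rw [heq k hk]
    have hmk : (1 : ℝ) ≤ (m k : ℝ) := by exact_mod_cast hpos k (by omega)
    have hc : ((m k : ℤ) : ℝ) ≤ ((m (j + 1) * (m j * n k - n j * m k) : ℤ) : ℝ) := by
      exact_mod_cast hlow j hj k hk
    push_cast at hc
    rw [div_le_div_iff₀ (by linarith) (by linarith)]
    push_cast
    linarith
  · apply le_of_tendsto ht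
    filter_upwards [eventually_atTop.2 ⟨j + 1, fun k hk => hk⟩] with k hk
    rw [heq k hk]
    have hmk : (1 : ℝ) ≤ (m k : ℝ) := by exact_mod_cast hpos k (by omega)
    -- integer: 3 * m (j+1) * D ≤ 4 * m k
    have hmk1 : (1 : ℤ) ≤ m (k + 1) := hpos (k + 1) (by omega)
    have hZ : 3 * (m (j + 1) * (m j * n k - n j * m k)) ≤ 4 * m k := by
      have h := hup j hj k hk
      have hd : 4 * (m j * m (j + 1)) ≥ 0 := by
        have := hpos j hj
        have := hpos (j + 1) (by omega : 1 ≤ j + 1)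
        positivity
      have h2 : 3 * (m (j + 1) * (m j * n k - n j * m k)) * m (k + 1)
          ≤ (4 * m k) * m (k + 1) := by nlinarith
      exact le_of_mul_le_mul_right h2 (by linarith)
    have hc : ((3 * (m (j + 1) * (m j * n k - n j * m k)) : ℤ) : ℝ) ≤ ((4 * m k : ℤ) : ℝ) := by
      exact_mod_cast hZ
    push_cast at hc
    rw [div_le_div_iff₀ (by linarith) (by linarith)]
    push_cast
    nlinarith
set_option maxHeartbeats 1000000 in
theorem stmt14 (e m n : ℕ → ℤ) (a : ℕ → ℝ) (α : ℝ) (η : ℝ → ℝ)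
    (he : ∀ j, 1 ≤ j → 3 ≤ e j)
    (hm0 : m 0 = 0) (hn0 : n 0 = -1) (hm1 : m 1 = 1) (hn1 : n 1 = 0)
    (hm : ∀ j, 1 ≤ j → m (j + 1) = e j * m j - m (j - 1))
    (hn : ∀ j, 1 ≤ j → n (j + 1) = e j * n j - n (j - 1))
    (ha : ∀ j, a j = ((n (j + 1) : ℝ) - (n j : ℝ)) / ((m (j + 1) : ℝ) - (m j : ℝ)))
    (hα : Tendsto (fun j => (n j : ℝ) / (m j : ℝ)) atTop (nhds α))
    (hη0 : ∀ x ≤ α, η x = 0)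
    (hη1 : ∀ x, a 0 ≤ x → η x = 1)
    (hηj : ∀ j, 1 ≤ j → ∀ x, a j ≤ x → x ≤ a (j - 1) → η x = (m j : ℝ) * x - (n j : ℝ)) :
    ∃ Ω > (0 : ℝ), ∀ x, α ≤ x → η x ≤ Ω * Real.sqrt (x - α) := by
  have hgrow := aux_grow e m he hm0 hm1 hm
  have hpos : ∀ j, 1 ≤ j → 1 ≤ m j := fun j hj => (hgrow j hj).1
  have hgrowZ : ∀ j, 1 ≤ j → 2 * m j ≤ m (j + 1) := by
    intro j hj; have := (hgrow j hj).2; omega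
  have hdet := aux_det e m n hm0 hn0 hm1 hn1 hm hn
  have hD := aux_D m n hpos hgrowZ hdet
  have hδ := aux_delta m n α hα hpos (fun j hj k hk => (hD j hj k hk).1)
    (fun j hj k hk => (hD j hj k hk).2)
  -- cast positivity helpers
  have hmR : ∀ j, 1 ≤ j → (1 : ℝ) ≤ (m j : ℝ) := fun j hj => by exact_mod_cast hpos j hj
  have hmnn : ∀ j, (0 : ℝ) ≤ (m j : ℝ) := by
    intro j
    match j with
    | 0 => rw [hm0]; norm_num
    | j + 1 => linarith [hmR (j + 1) (by omega)]
  have hΔZ : ∀ j, 1 ≤ m (j + 1) - m j := by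
    intro j
    match j with
    | 0 => have h01 : m (0 + 1) = m 1 := rfl; omega
    | j + 1 => have := hgrow (j + 1) (by omega); omega
  have hΔR : ∀ j, (1 : ℝ) ≤ (m (j + 1) : ℝ) - (m j : ℝ) := by
    intro j; exact_mod_cast hΔZ j
  have hΔm2 : ∀ j, (m (j + 1) : ℝ) ≤ 2 * ((m (j + 1) : ℝ) - (m j : ℝ)) := by
    intro j
    have : m (j + 1) ≤ 2 * (m (j + 1) - m j) := by
      match j with
      | 0 => have h01 : m (0 + 1) = m 1 := rfl; omega
      | j + 1 => have := hgrow (j + 1) (by omega); omega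
    exact_mod_cast this
  have hgrowR : ∀ j, 1 ≤ j → 2 * (m j : ℝ) ≤ (m (j + 1) : ℝ) := by
    intro j hj
    have := (hgrow j hj).2
    have : 2 * m j ≤ m (j + 1) := by omega
    exact_mod_cast this
  -- δ explicit values
  have hδ0 : (m 0 : ℝ) * α - (n 0 : ℝ) = 1 := by rw [hm0, hn0]; push_cast; ring
  have hδ1 : (m 1 : ℝ) * α - (n 1 : ℝ) = α := by rw [hm1, hn1]; push_cast; ring
  have hm2 : (3 : ℤ) ≤ m 2 := by
    have h := hm 1 le_rfl
    simp only [Nat.sub_self] at h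
    rw [h, hm0, hm1]
    have := he 1 le_rfl
    omega
  have hm2R : (3 : ℝ) ≤ (m 2 : ℝ) := by exact_mod_cast hm2
  have hαub : α ≤ 4 / 9 := by
    have h := (hδ 1 le_rfl).2
    rw [hδ1] at h
    have : 4 / (3 * (m 2 : ℝ)) ≤ 4 / 9 := by
      rw [div_le_div_iff₀ (by linarith) (by norm_num)]
      linarith
    linarith
  have hαpos : 0 < α := by
    have h := (hδ 1 le_rfl).1
    rw [hδ1] at h
    have : 0 < 1 / (m 2 : ℝ) := by positivity
    linarith
  -- gap bounds
  have hgap : ∀ j, 1 / (3 * (m (j + 1) : ℝ)) ≤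
      ((m j : ℝ) * α - (n j : ℝ)) - ((m (j + 1) : ℝ) * α - (n (j + 1) : ℝ)) ∧
      ((m j : ℝ) * α - (n j : ℝ)) - ((m (j + 1) : ℝ) * α - (n (j + 1) : ℝ))
        ≤ 4 / (3 * (m (j + 1) : ℝ)) := by
    intro j
    match j with
    | 0 =>
      rw [hδ0, hδ1, hm1]
      norm_num
      constructor <;> linarith
    | i + 1 =>
      have hM : (1 : ℝ) ≤ (m (i + 2) : ℝ) := hmR (i + 2) (by omega)
      have hM2 : (1 : ℝ) ≤ (m (i + 3) : ℝ) := hmR (i + 3) (by omega)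
      have hMM : 2 * (m (i + 2) : ℝ) ≤ (m (i + 3) : ℝ) := hgrowR (i + 2) (by omega)
      have hA := (hδ (i + 1) (by omega)).1
      have hB := (hδ (i + 2) (by omega)).2
      have hC := (hδ (i + 2) (by omega)).1
      have hAu := (hδ (i + 1) (by omega)).2
      have hCpos : (0 : ℝ) < 1 / (m (i + 3) : ℝ) := by positivity
      constructor
      · have h1 : 4 / (3 * (m (i + 3) : ℝ)) ≤ 2 / (3 * (m (i + 2) : ℝ)) := by
          rw [div_le_div_iff₀ (by linarith) (by linarith)]
          linarith
        have h2 : 1 / (m (i + 2) : ℝ) - 2 / (3 * (m (i + 2) : ℝ)) = 1 / (3 * (m (i + 2) : ℝ)) := by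
          field_simp
          ring
        linarith
      · linarith
  -- a j - α formula
  have ha' : ∀ j, a j - α =
      (((m j : ℝ) * α - (n j : ℝ)) - ((m (j + 1) : ℝ) * α - (n (j + 1) : ℝ)))
        / ((m (j + 1) : ℝ) - (m j : ℝ)) := by
    intro j
    have hne : ((m (j + 1) : ℝ) - (m j : ℝ)) ≠ 0 := by linarith [hΔR j]
    rw [ha j]
    field_simp
    ring
  -- lower bound on a j - α
  have hL : ∀ j, 1 / (3 * (m (j + 1) : ℝ) ^ 2) ≤ a j - α := by
    intro j
    rw [ha' j]
    set M : ℝ := (m (j + 1) : ℝ) with hMdef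
    set D : ℝ := M - (m j : ℝ) with hDdef
    have hD1 : (1 : ℝ) ≤ D := hΔR j
    have hDM : D ≤ M := by have := hmnn j; simp only [hDdef]; linarith
    have hM1 : (1 : ℝ) ≤ M := by linarith
    have hg := (hgap j).1
    rw [div_le_div_iff₀ (by positivity) (by linarith)]
    have hg' : 1 ≤ (((m j : ℝ) * α - (n j : ℝ)) - (M * α - (n (j + 1) : ℝ))) * (3 * M) := by
      rw [div_le_iff₀ (by linarith : (0:ℝ) < 3 * M)] at hg
      linarith
    nlinarith [mul_nonneg (by linarith : (0:ℝ) ≤ (((m j : ℝ) * α - (n j : ℝ)) - (M * α - (n (j + 1) : ℝ))) * (3 * M) - 1) (by linarith : (0:ℝ) ≤ M)]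
  -- upper bound on a j - α
  have hU : ∀ j, a j - α ≤ (2 / (m (j + 1) : ℝ)) ^ 2 := by
    intro j
    rw [ha' j]
    set M : ℝ := (m (j + 1) : ℝ) with hMdef
    set D : ℝ := M - (m j : ℝ) with hDdef
    have hD1 : (1 : ℝ) ≤ D := hΔR j
    have hM2D : M ≤ 2 * D := hΔm2 j
    have hM1 : (1 : ℝ) ≤ M := hmR (j + 1) (by omega)
    have hg := (hgap j).2
    have hg0 : 0 ≤ ((m j : ℝ) * α - (n j : ℝ)) - (M * α - (n (j + 1) : ℝ)) := by
      have := (hgap j).1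
      have : (0:ℝ) < 1 / (3 * M) := by positivity
      linarith [(hgap j).1]
    rw [div_pow, div_le_div_iff₀ (by linarith) (by positivity)]
    have hg' : (((m j : ℝ) * α - (n j : ℝ)) - (M * α - (n (j + 1) : ℝ))) * (3 * M) ≤ 4 := by
      rw [le_div_iff₀ (by linarith : (0:ℝ) < 3 * M)] at hg
      linarith
    nlinarith [mul_nonneg (by linarith : (0:ℝ) ≤ 4 - (((m j : ℝ) * α - (n j : ℝ)) - (M * α - (n (j + 1) : ℝ))) * (3 * M)) (by linarith : (0:ℝ) ≤ M)]
  classical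
  have hm1R : ((m 1 : ℤ) : ℝ) = 1 := by rw [hm1]; norm_num
  -- m k ≥ k
  have hmk : ∀ k : ℕ, 1 ≤ k → (k : ℤ) ≤ m k := by
    intro k hk
    induction k, hk using Nat.le_induction with
    | base => omega
    | succ k hk ih =>
      have := hgrowZ k hk
      have := hpos k hk
      push_cast
      push_cast at ih
      omega
  -- existence of an index below x
  have hex : ∀ x, α < x → ∃ j, a j < x := by
    intro x hx
    obtain ⟨N, hN⟩ := exists_nat_gt (4 / (x - α))
    refine ⟨N + 1, ?_⟩
    have hxα : (0 : ℝ) < x - α := by linarith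
    have hD1 := hΔR (N + 1)
    have hg := (hgap (N + 1)).2
    have hg0 : 0 ≤ ((m (N+1) : ℝ) * α - (n (N+1) : ℝ)) - ((m (N + 2) : ℝ) * α - (n (N + 2) : ℝ)) := by
      have h0 := (hgap (N + 1)).1
      have : (0:ℝ) < 1 / (3 * (m (N + 2) : ℝ)) := by
        have := hmR (N + 2) (by omega); positivity
      linarith
    have haN : a (N + 1) - α ≤ 4 / (3 * (m (N + 2) : ℝ)) := by
      rw [ha' (N + 1)]
      calc _ ≤ ((m (N+1) : ℝ) * α - (n (N+1) : ℝ)) - ((m (N + 2) : ℝ) * α - (n (N + 2) : ℝ)) :=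
            div_le_self hg0 hD1
        _ ≤ _ := hg
    have hmN : (N + 2 : ℝ) ≤ (m (N + 2) : ℝ) := by exact_mod_cast hmk (N + 2) (by omega)
    have h2 : 4 / (3 * (m (N + 2) : ℝ)) ≤ 4 / (3 * (N + 2 : ℝ)) := by
      rw [div_le_div_iff₀ (by linarith) (by positivity)]
      nlinarith
    have h3 : 4 / (3 * (N + 2 : ℝ)) < x - α := by
      rw [div_lt_iff₀ (by positivity)]
      rw [div_lt_iff₀ hxα] at hN
      nlinarith
    linarith
  -- main statement
  refine ⟨10, by norm_num, ?_⟩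
  intro x hx
  rcases eq_or_lt_of_le hx with heq | hlt
  · rw [hη0 x (le_of_eq heq.symm)]
    positivity
  · by_cases h1 : a 0 ≤ x
    · rw [hη1 x h1]
      have ht : (1 : ℝ) / 3 ≤ x - α := by
        have h := hL 0
        rw [hm1R] at h
        norm_num at h
        linarith
      have hs : (1 : ℝ) / 2 ≤ Real.sqrt (x - α) := by
        have h2 : ((1 : ℝ) / 2) = Real.sqrt ((1 / 2) ^ 2) := (Real.sqrt_sq (by norm_num)).symm
        rw [h2]
        apply Real.sqrt_le_sqrt
        nlinarith
      linarith
    · push_neg at h1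
      obtain ⟨J0, hJ0⟩ := hex x hlt
      have hfind : a (Nat.find (hex x hlt)) < x := Nat.find_spec (hex x hlt)
      have hj1 : 1 ≤ Nat.find (hex x hlt) := by
        rcases Nat.eq_zero_or_pos (Nat.find (hex x hlt)) with h | h
        · rw [h] at hfind; linarith
        · omega
      obtain ⟨i, hi⟩ : ∃ i, Nat.find (hex x hlt) = i + 1 :=
        ⟨Nat.find (hex x hlt) - 1, by omega⟩
      rw [hi] at hfind
      have hxr : x ≤ a i := by
        have hmin := Nat.find_min (hex x hlt) (show i < Nat.find (hex x hlt) by omega)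
        push_neg at hmin
        exact hmin
      have hxl : a (i + 1) ≤ x := hfind.le
      rw [hηj (i + 1) (by omega) x hxl hxr]
      have hM1 : (1 : ℝ) ≤ (m (i + 1) : ℝ) := hmR (i + 1) (by omega)
      have hM2 : (1 : ℝ) ≤ (m (i + 2) : ℝ) := hmR (i + 2) (by omega)
      set M : ℝ := (m (i + 1) : ℝ)
      set M2 : ℝ := (m (i + 2) : ℝ)
      have hδub : (m (i + 1) : ℝ) * α - (n (i + 1) : ℝ) ≤ 4 / (3 * M2) :=
        (hδ (i + 1) (by omega)).2
      have ht0 : (0 : ℝ) < x - α := by linarith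
      have hsnn : 0 ≤ Real.sqrt (x - α) := Real.sqrt_nonneg _
      have hss : Real.sqrt (x - α) * Real.sqrt (x - α) = x - α := Real.mul_self_sqrt ht0.le
      -- upper bound on sqrt
      have hsu : Real.sqrt (x - α) ≤ 2 / M := by
        have h := hU i
        have h2 : x - α ≤ (2 / M) ^ 2 := by linarith
        have h3 : Real.sqrt ((2 / M) ^ 2) = 2 / M := Real.sqrt_sq (by positivity)
        rw [← h3]
        exact Real.sqrt_le_sqrt h2
      -- lower bound on sqrt
      have hsl : 1 / (2 * M2) ≤ Real.sqrt (x - α) := by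
        have h := hL (i + 1)
        have h2 : (1 / (2 * M2)) ^ 2 ≤ x - α := by
          have h4 : (1 / (2 * M2)) ^ 2 ≤ 1 / (3 * M2 ^ 2) := by
            rw [div_pow, div_le_div_iff₀ (by positivity) (by positivity)]
            nlinarith
          linarith
        have h3 : Real.sqrt ((1 / (2 * M2)) ^ 2) = 1 / (2 * M2) := Real.sqrt_sq (by positivity)
        rw [← h3]
        exact Real.sqrt_le_sqrt h2
      -- combine
      have hMs : M * Real.sqrt (x - α) ≤ 2 := by
        have := mul_le_mul_of_nonneg_left hsu (by linarith : (0 : ℝ) ≤ M)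
        rwa [mul_div_cancel₀ 2 (by linarith : M ≠ 0)] at this
      have hpart1 : M * (x - α) ≤ 2 * Real.sqrt (x - α) := by
        calc M * (x - α) = M * (Real.sqrt (x - α) * Real.sqrt (x - α)) := by rw [hss]
          _ = (M * Real.sqrt (x - α)) * Real.sqrt (x - α) := by ring
          _ ≤ 2 * Real.sqrt (x - α) := by
              apply mul_le_mul_of_nonneg_right hMs hsnn
      have hpart2 : M * α - (n (i + 1) : ℝ) ≤ 3 * Real.sqrt (x - α) := by
        have hinv : 1 / M2 ≤ 2 * Real.sqrt (x - α) := by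
          have : 1 / M2 = 2 * (1 / (2 * M2)) := by field_simp
          rw [this]; linarith
        have heq2 : 4 / (3 * M2) = (4 / 3) * (1 / M2) := by ring
        have : (m (i + 1) : ℝ) * α - (n (i + 1) : ℝ) ≤ (4 / 3) * (2 * Real.sqrt (x - α)) := by
          rw [heq2] at hδub
          have : (4:ℝ)/3 * (1 / M2) ≤ 4 / 3 * (2 * Real.sqrt (x - α)) := by linarith
          linarith
        linarith
      have : M * x - (n (i + 1) : ℝ) = M * (x - α) + (M * α - (n (i + 1) : ℝ)) := by ring
      rw [this]
      linarith
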